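/- arXiv:1904.03322 — 2 statements merged into one kernel-verified Lean document; each statement's English description precedes it below -/
import Mathlib

section
/- Let a_1,…,a_m be positive constants and let f be constraint curves where each f_j is homogeneous of degree α_j > 0. Define constraint curves f' by f'_j(b) = a_j·f_j(b). Then the set of Nash equilibrium allocations of ATP(f) equals that of ATP(f'), i.e., NE_X(ATP(f)) = NE_X(ATP(f')). -/
open scoped Classical
open Real

namespace BandwidthAlloc

/-- A bid: `none` denotes the special bid β; `some r` denotes the real bid `r ≥ 0`. -/
abbrev Bid := Option NNReal

/-- Numeric value of a bid (β is treated as 0 in arithmetic). -/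
noncomputable def bval (b : Bid) : ℝ := ((b.getD 0 : NNReal) : ℝ)

/-- A bid is positive when it is neither 0 nor β. -/
def posBid (b : Bid) : Prop := 0 < bval b

/-- Utility of the bundle `xi` for an agent with desired set `Ri`: `min_{j ∈ Ri} xi j`. -/
noncomputable def bundleUtil {m : ℕ} (Ri : Finset (Fin m)) (xi : Fin m → ℝ) : ℝ :=
  sInf (xi '' (Ri : Set (Fin m)))

/-- Bandwidth-allocation utility of agent `i` under allocation `x`. -/
noncomputable def util {n m : ℕ} (R : Fin n → Finset (Fin m))
    (x : Fin n → Fin m → ℝ) (i : Fin n) : ℝ :=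
  bundleUtil (R i) (x i)

/-- Weights: `w R i j = 1` iff `j ∈ R i`, else `0`. -/
noncomputable def w {n m : ℕ} (R : Fin n → Finset (Fin m)) (i : Fin n) (j : Fin m) : ℝ :=
  if j ∈ R i then 1 else 0

/-- A valid (nonnegative, supply-respecting) allocation. -/
def validAlloc {n m : ℕ} (s : Fin m → ℝ) (x : Fin n → Fin m → ℝ) : Prop :=
  (∀ i j, 0 ≤ x i j) ∧ ∀ j, ∑ i, x i j ≤ s j

/-- CES welfare of the utility vector `v` (`ρ = 0` is Nash welfare; for `ρ < 0` a zero
utility yields welfare `0`, the limiting convention). -/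
noncomputable def ces (ρ : ℝ) {n : ℕ} (v : Fin n → ℝ) : ℝ :=
  if ρ = 0 then ∏ i, v i
  else if ρ < 0 ∧ ∃ i, v i = 0 then 0
  else (∑ i, v i ^ ρ) ^ (1 / ρ)

/-- `Ψ_ρ`: `x` is a valid allocation maximizing CES welfare among valid allocations. -/
def maxCES (ρ : ℝ) {n m : ℕ} (s : Fin m → ℝ) (R : Fin n → Finset (Fin m))
    (x : Fin n → Fin m → ℝ) : Prop :=
  validAlloc s x ∧ ∀ y, validAlloc s y → ces ρ (util R y) ≤ ces ρ (util R x)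

/-- Constraint curve: continuous, normalized, strictly increasing, nonnegative on `[0,∞)`. -/
def IsConstraintCurve (f : ℝ → ℝ) : Prop :=
  ContinuousOn f (Set.Ici 0) ∧ f 0 = 0 ∧ StrictMonoOn f (Set.Ici 0) ∧
    ∀ y ∈ Set.Ici (0 : ℝ), 0 ≤ f y

/-- `g` is identically zero on `[0,∞)`. -/
def zeroOn (g : ℝ → ℝ) : Prop := ∀ y ∈ Set.Ici (0 : ℝ), g y = 0

/-- Price curve: continuous, normalized, nonnegative, and either strictly increasing or
identically zero on `[0,∞)`. -/
def IsPriceCurve (g : ℝ → ℝ) : Prop :=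
  ContinuousOn g (Set.Ici 0) ∧ g 0 = 0 ∧ (∀ y ∈ Set.Ici (0 : ℝ), 0 ≤ g y) ∧
    (StrictMonoOn g (Set.Ici 0) ∨ zeroOn g)

/-- Cost of the bundle `xi` under price curves `g`. -/
noncomputable def cost {m : ℕ} (g : Fin m → ℝ → ℝ) (xi : Fin m → ℝ) : ℝ :=
  ∑ j, g j (xi j)

/-- `xi` is in the demand set of an agent with desired set `Ri` under price curves `g`. -/
def inDemand {m : ℕ} (g : Fin m → ℝ → ℝ) (Ri : Finset (Fin m)) (xi : Fin m → ℝ) : Prop :=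
  (∀ j, 0 ≤ xi j) ∧ cost g xi ≤ 1 ∧
    ∀ yi : Fin m → ℝ, (∀ j, 0 ≤ yi j) → cost g yi ≤ 1 → bundleUtil Ri yi ≤ bundleUtil Ri xi

/-- Price curve equilibrium. -/
def isPCE {n m : ℕ} (s : Fin m → ℝ) (R : Fin n → Finset (Fin m))
    (x : Fin n → Fin m → ℝ) (g : Fin m → ℝ → ℝ) : Prop :=
  (∀ i, inDemand g (R i) (x i)) ∧ (∀ j, ∑ i, x i j ≤ s j) ∧
    ∀ j, ¬ zeroOn (g j) → ∑ i, x i j = s j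

/-- Step 1 of the ATP allocation rule: proportional sharing. -/
noncomputable def atp1 {n m : ℕ} (s : Fin m → ℝ) (b : Fin n → Fin m → Bid)
    (i : Fin n) (j : Fin m) : ℝ :=
  bval (b i j) / (∑ k, bval (b k j)) * s j

/-- Steps 1–2 of the ATP allocation rule: goods with a positive bid are shared
proportionally; on a good where everyone bids `0` or `β`, an agent bidding `β` receives
as much as she receives of some fixed good on which she bids positively. -/
noncomputable def atp2 {n m : ℕ} (s : Fin m → ℝ) (b : Fin n → Fin m → Bid)
    (i : Fin n) (j : Fin m) : ℝ :=
  if ∃ k, posBid (b k j) then atp1 s b i j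
  else if b i j = none then
    (if h : ∃ ℓ, posBid (b i ℓ) then atp1 s b i (Classical.choose h) else 0)
  else 0

/-- The full ATP allocation rule (steps 1–3): agents bidding `β` on an oversubscribed
step-2 good are penalized with the zero bundle. -/
noncomputable def atp {n m : ℕ} (s : Fin m → ℝ) (b : Fin n → Fin m → Bid)
    (i : Fin n) (j : Fin m) : ℝ :=
  if ∃ ℓ, (¬ ∃ k, posBid (b k ℓ)) ∧ b i ℓ = none ∧ s ℓ < ∑ k, atp2 s b k ℓ then 0
  else atp2 s b i j

/-- Total bid-constraint cost `C_f(b_i)` of agent `i`'s bid vector. -/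
noncomputable def bidCost {m : ℕ} (f : Fin m → ℝ → ℝ) (bi : Fin m → Bid) : ℝ :=
  ∑ j, f j (bval (bi j))

/-- A bid vector is feasible if it obeys the bid constraint `C_f(b_i) ≤ 1`. -/
def feasibleBid {m : ℕ} (f : Fin m → ℝ → ℝ) (bi : Fin m → Bid) : Prop :=
  bidCost f bi ≤ 1

/-- `b` is a Nash equilibrium of `ATP(f)`: all bids are feasible and no agent can
strictly increase her utility by a unilateral feasible deviation. -/
def isNE {n m : ℕ} (s : Fin m → ℝ) (f : Fin m → ℝ → ℝ)
    (R : Fin n → Finset (Fin m)) (b : Fin n → Fin m → Bid) : Prop :=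
  (∀ i, feasibleBid f (b i)) ∧
    ∀ (i : Fin n) (bi' : Fin m → Bid), feasibleBid f bi' →
      util R (atp s (Function.update b i bi')) i ≤ util R (atp s b) i

/-- `NE_X(ATP(f))`: allocations arising from Nash equilibrium bid profiles. -/
def NEX {n m : ℕ} (s : Fin m → ℝ) (f : Fin m → ℝ → ℝ)
    (R : Fin n → Finset (Fin m)) : Set (Fin n → Fin m → ℝ) :=
  {x | ∃ b, isNE s f R b ∧ x = atp s b}

/-- `f` is homogeneous of degree `α` on the nonnegative reals. -/
def Homog (f : ℝ → ℝ) (α : ℝ) : Prop :=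
  ∀ c ≥ (0 : ℝ), ∀ y ≥ (0 : ℝ), f (c * y) = c ^ α * f y

/-- `γ* = max {γ ≥ 0 : γ · Σ_i w_{ij} ≤ s_j for all j}` of Mechanism 1. -/
noncomputable def gammaStar {n m : ℕ} (s : Fin m → ℝ) (R : Fin n → Finset (Fin m)) : ℝ :=
  sSup {γ : ℝ | 0 ≤ γ ∧ ∀ j, γ * ∑ i, w R i j ≤ s j}

/-- Mechanism 1: `x i j = γ* · w i j`. -/
noncomputable def mech1 {n m : ℕ} (s : Fin m → ℝ) (R : Fin n → Finset (Fin m)) :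
    Fin n → Fin m → ℝ :=
  fun i j => gammaStar s R * w R i j

/-- `min_i u_i(x_i)`. -/
noncomputable def minUtil {n m : ℕ} (R : Fin n → Finset (Fin m))
    (x : Fin n → Fin m → ℝ) : ℝ :=
  sInf (Set.range fun i => util R x i)

/-- `x` is maxmin-optimal: valid and attaining the maximum of `min_i u_i` over valid
allocations. -/
def maxminOptimal {n m : ℕ} (s : Fin m → ℝ) (R : Fin n → Finset (Fin m))
    (x : Fin n → Fin m → ℝ) : Prop :=
  validAlloc s x ∧ ∀ y, validAlloc s y → minUtil R y ≤ minUtil R x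

/-- Mechanism 2: `P i k` is the set agent `i` claims agent `k` desires.
`eta P i = |{k : R_k(k) ≠ R_k(i)}|`. -/
noncomputable def eta {n m : ℕ} (P : Fin n → Fin n → Finset (Fin m)) (i : Fin n) : ℕ :=
  (Finset.univ.filter fun k => P k k ≠ P i k).card

/-- Agent `i` is in `N̄`: for some `k`, `R_k(k) ⊊ R_k(i)`. -/
def inNbar {n m : ℕ} (P : Fin n → Fin n → Finset (Fin m)) (i : Fin n) : Prop :=
  ∃ k, P k k ⊂ P i k

/-- The penalty factor `α_i` of Mechanism 2. -/
noncomputable def alpha {n m : ℕ} (P : Fin n → Fin n → Finset (Fin m)) (i : Fin n) : ℝ :=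
  if inNbar P i then 0 else 1 - (eta P i : ℝ) / n

/-- Effective reported sets of Mechanism 2: agents in `N̄` are replaced by `∅`. -/
noncomputable def effSets {n m : ℕ} (P : Fin n → Fin n → Finset (Fin m)) :
    Fin n → Finset (Fin m) :=
  fun i => if inNbar P i then ∅ else P i i

/-- Mechanism 2: the allocation `x_i = α_i · y_i` where `y` is the Mechanism 1 outcome
on the effective sets. -/
noncomputable def mech2 {n m : ℕ} (s : Fin m → ℝ) (P : Fin n → Fin n → Finset (Fin m)) :
    Fin n → Fin m → ℝ :=
  fun i j => alpha P i * mech1 s (effSets P) i j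


/-- Scale a bid by a positive constant (β stays β). -/
noncomputable def sc (c : NNReal) (o : Bid) : Bid := o.map (c * ·)

lemma bval_nonneg (o : Bid) : 0 ≤ bval o := (o.getD 0).coe_nonneg

lemma bval_none : bval (none : Bid) = 0 := rfl

lemma bval_some (r : NNReal) : bval (some r : Bid) = (r : ℝ) := rfl

lemma sc_none (c : NNReal) : sc c none = none := rfl

lemma sc_some (c r : NNReal) : sc c (some r) = some (c * r) := rfl

lemma bval_sc (c : NNReal) (o : Bid) : bval (sc c o) = (c : ℝ) * bval o := by
  cases o with
  | none => rw [sc_none, bval_none]; ring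
  | some r => rw [sc_some, bval_some, bval_some]; push_cast; ring

lemma sc_eq_none {c : NNReal} {o : Bid} : sc c o = none ↔ o = none := by
  cases o with
  | none => rw [sc_none]
  | some r =>
    rw [sc_some]
    exact ⟨fun h => absurd h (Option.some_ne_none _), fun h => absurd h (Option.some_ne_none _)⟩

lemma posBid_sc {c : NNReal} (hc : 0 < c) (o : Bid) : posBid (sc c o) ↔ posBid o := by
  unfold posBid
  rw [bval_sc]
  have hc' : (0 : ℝ) < c := hc
  constructor
  · intro h
    by_contra hb
    push_neg at hb
    have := bval_nonneg o
    nlinarith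
  · intro h; positivity

lemma sc_sc_inv (c : NNReal) (hc : c ≠ 0) (o : Bid) : sc c (sc c⁻¹ o) = o := by
  cases o with
  | none => rfl
  | some r => rw [sc_some, sc_some, ← mul_assoc, mul_inv_cancel₀ hc, one_mul]

lemma atp1_sc {n m : ℕ} (s : Fin m → ℝ) (c : Fin m → NNReal) (hc : ∀ j, 0 < c j)
    (b : Fin n → Fin m → Bid) (i : Fin n) (j : Fin m) :
    atp1 s (fun k l => sc (c l) (b k l)) i j = atp1 s b i j := by
  unfold atp1
  simp only [bval_sc]
  rw [← Finset.mul_sum, mul_div_mul_left]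
  exact_mod_cast (hc j).ne'

lemma atp2_sc {n m : ℕ} (s : Fin m → ℝ) (c : Fin m → NNReal) (hc : ∀ j, 0 < c j)
    (b : Fin n → Fin m → Bid) :
    atp2 s (fun k l => sc (c l) (b k l)) = atp2 s b := by
  funext i j
  have hpos : ∀ (k : Fin n) (l : Fin m), posBid (sc (c l) (b k l)) = posBid (b k l) :=
    fun k l => propext (posBid_sc (hc l) _)
  unfold atp2
  simp only [hpos, sc_eq_none, atp1_sc s c hc]

lemma atp_sc {n m : ℕ} (s : Fin m → ℝ) (c : Fin m → NNReal) (hc : ∀ j, 0 < c j)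
    (b : Fin n → Fin m → Bid) :
    atp s (fun k l => sc (c l) (b k l)) = atp s b := by
  funext i j
  have hpos : ∀ (k : Fin n) (l : Fin m), posBid (sc (c l) (b k l)) = posBid (b k l) :=
    fun k l => propext (posBid_sc (hc l) _)
  unfold atp
  simp only [hpos, sc_eq_none, atp2_sc s c hc]

lemma nex_subset {n m : ℕ} (s : Fin m → ℝ) (R : Fin n → Finset (Fin m))
    (f g : Fin m → ℝ → ℝ) (c : Fin m → NNReal) (hc : ∀ j, 0 < c j)
    (hfg : ∀ j y, 0 ≤ y → g j ((c j : ℝ) * y) = f j y) :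
    NEX s f R ⊆ NEX s g R := by
  rintro x ⟨b, ⟨hfeas, hdev⟩, rfl⟩
  refine ⟨fun k l => sc (c l) (b k l), ⟨?_, ?_⟩, (atp_sc s c hc b).symm⟩
  · intro i
    unfold feasibleBid bidCost at *
    calc ∑ j, g j (bval (sc (c j) (b i j)))
        = ∑ j, f j (bval (b i j)) := by
          refine Finset.sum_congr rfl fun j _ => ?_
          rw [bval_sc]; exact hfg j _ (bval_nonneg _)
      _ ≤ 1 := hfeas i
  · intro i bi' hbi'
    have hcne : ∀ j, ((c j : ℝ)) ≠ 0 := fun j => by exact_mod_cast (hc j).ne'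
    set bi0 : Fin m → Bid := fun j => sc (c j)⁻¹ (bi' j) with hbi0
    have hfeas0 : feasibleBid f bi0 := by
      unfold feasibleBid bidCost at *
      calc ∑ j, f j (bval (bi0 j)) = ∑ j, g j (bval (bi' j)) := by
            refine Finset.sum_congr rfl fun j _ => ?_
            have hb0 : bval (bi0 j) = ((c j : ℝ))⁻¹ * bval (bi' j) := by
              simp [hbi0, bval_sc]
            rw [hb0, ← hfg j _ (mul_nonneg (by positivity) (bval_nonneg _))]
            congr 1
            rw [← mul_assoc, mul_inv_cancel₀ (hcne j), one_mul]
        _ ≤ 1 := hbi'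
    have hup : Function.update (fun k l => sc (c l) (b k l)) i bi'
        = fun k l => sc (c l) (Function.update b i bi0 k l) := by
      funext k l
      by_cases hk : k = i
      · subst hk
        simp [Function.update_self, hbi0, sc_sc_inv (c l) (hc l).ne']
      · simp [Function.update_of_ne hk]
    rw [hup, atp_sc s c hc (Function.update b i bi0), atp_sc s c hc b]
    exact hdev i bi0 hfeas0

/-- Lemma scaling: scaling homogeneous constraint curves by positive
constants does not change the set of Nash equilibrium allocations:
`NE_X(ATP(f)) = NE_X(ATP(f'))` where `f'_j(b) = a_j · f_j(b)`. -/
theorem scaling_eq {n m : ℕ} (s : Fin m → ℝ) (hs : ∀ j, 0 < s j)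
    (R : Fin n → Finset (Fin m)) (hR : ∀ i, (R i).Nonempty)
    (a : Fin m → ℝ) (ha : ∀ j, 0 < a j)
    (f : Fin m → ℝ → ℝ) (hf : ∀ j, IsConstraintCurve (f j))
    (α : Fin m → ℝ) (hα : ∀ j, 0 < α j) (hhom : ∀ j, Homog (f j) (α j)) :
    NEX s f R = NEX s (fun j y => a j * f j y) R := by
  have hcpos1 : ∀ j, (0:ℝ) < a j ^ (-(1 / α j)) := fun j => Real.rpow_pos_of_pos (ha j) _
  have hcpos2 : ∀ j, (0:ℝ) < a j ^ (1 / α j) := fun j => Real.rpow_pos_of_pos (ha j) _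
  set c1 : Fin m → NNReal := fun j => (a j ^ (-(1 / α j))).toNNReal with hc1def
  set c2 : Fin m → NNReal := fun j => (a j ^ (1 / α j)).toNNReal with hc2def
  have hc1 : ∀ j, 0 < c1 j := fun j => by
    simpa [hc1def, Real.toNNReal_pos] using hcpos1 j
  have hc2 : ∀ j, 0 < c2 j := fun j => by
    simpa [hc2def, Real.toNNReal_pos] using hcpos2 j
  have hcoe1 : ∀ j, ((c1 j : ℝ)) = a j ^ (-(1 / α j)) := fun j =>
    Real.coe_toNNReal _ (hcpos1 j).le
  have hcoe2 : ∀ j, ((c2 j : ℝ)) = a j ^ (1 / α j) := fun j =>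
    Real.coe_toNNReal _ (hcpos2 j).le
  apply Set.Subset.antisymm
  · refine nex_subset s R f (fun j y => a j * f j y) c1 hc1 ?_
    intro j y hy
    show a j * f j ((c1 j : ℝ) * y) = f j y
    rw [hcoe1, hhom j _ (hcpos1 j).le y hy]
    have hpow : (a j ^ (-(1 / α j))) ^ α j = (a j)⁻¹ := by
      rw [← Real.rpow_mul (ha j).le, neg_mul, one_div,
        inv_mul_cancel₀ (hα j).ne', Real.rpow_neg (ha j).le, Real.rpow_one]
    rw [hpow, ← mul_assoc, mul_inv_cancel₀ (ha j).ne', one_mul]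
  · refine nex_subset s R (fun j y => a j * f j y) f c2 hc2 ?_
    intro j y hy
    show f j ((c2 j : ℝ) * y) = a j * f j y
    rw [hcoe2, hhom j _ (hcpos2 j).le y hy]
    have hpow : (a j ^ (1 / α j)) ^ α j = a j := by
      rw [← Real.rpow_mul (ha j).le, one_div, inv_mul_cancel₀ (hα j).ne', Real.rpow_one]
    rw [hpow]


end BandwidthAlloc
end

section
/- For every ρ ∈ (-∞, 1) and every allocation x ∈ Ψ_ρ(u), there exist nonnegative constants q_1,…,q_m such that, with price curves g defined by g_j(y) = q_j·y^{1-ρ}, the pair (x, g) is a price curve equilibrium. -/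
open scoped Classical
open Real

namespace BandwidthAlloc

lemma bundleUtil_le {m : ℕ} {Ri : Finset (Fin m)} (xi : Fin m → ℝ) {j : Fin m}
    (hj : j ∈ Ri) : bundleUtil Ri xi ≤ xi j :=
  csInf_le (Set.Finite.bddBelow ((Ri.finite_toSet).image xi)) ⟨j, by simpa using hj, rfl⟩

lemma le_bundleUtil {m : ℕ} {Ri : Finset (Fin m)} (xi : Fin m → ℝ) {c : ℝ}
    (h : Ri.Nonempty) (hc : ∀ j ∈ Ri, c ≤ xi j) : c ≤ bundleUtil Ri xi := by
  apply le_csInf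
  · obtain ⟨j, hj⟩ := h
    exact ⟨xi j, j, by simpa using hj, rfl⟩
  · rintro b ⟨j, hj, rfl⟩
    exact hc j (by simpa using hj)

/-- The per-agent summand of the CES objective, as a function of utility. -/
noncomputable def phi (ρ : ℝ) (t : ℝ) : ℝ :=
  if ρ = 0 then Real.log t else if 0 < ρ then t ^ ρ else -(t ^ ρ)

/-- The positive constant `κ` with `φ'(t) = κ t^(ρ-1)`. -/
noncomputable def kk (ρ : ℝ) : ℝ := if ρ = 0 then 1 else |ρ|

lemma kk_pos {ρ : ℝ} : 0 < kk ρ := by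
  unfold kk; split_ifs with h
  · norm_num
  · exact abs_pos.2 h

lemma phi_hasDerivAt {ρ t : ℝ} (ht : 0 < t) :
    HasDerivAt (phi ρ) (kk ρ * t ^ (ρ - 1)) t := by
  rcases lt_trichotomy ρ 0 with h | rfl | h
  · have hphi : phi ρ = fun t : ℝ => -(t ^ ρ) := by
      funext t; simp [phi, h.ne, not_lt.2 h.le]
    have hkk : kk ρ = -ρ := by simp [kk, h.ne, abs_of_neg h]
    rw [hphi, hkk]
    have := (Real.hasDerivAt_rpow_const (x := t) (p := ρ) (Or.inl ht.ne')).fun_neg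
    rw [neg_mul]
    exact this
  · have hphi : phi 0 = Real.log := by funext t; simp [phi]
    have hkk : kk 0 = 1 := by simp [kk]
    rw [hphi, hkk]
    have h1 : (1 : ℝ) * t ^ ((0:ℝ) - 1) = t⁻¹ := by
      rw [zero_sub, Real.rpow_neg_one, one_mul]
    rw [h1]
    exact Real.hasDerivAt_log ht.ne'
  · have hphi : phi ρ = fun t : ℝ => t ^ ρ := by
      funext t; simp [phi, h.ne', h]
    have hkk : kk ρ = ρ := by simp [kk, h.ne', abs_of_pos h]
    rw [hphi, hkk]
    exact Real.hasDerivAt_rpow_const (Or.inl ht.ne')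

lemma phi_lt_phi {ρ a b : ℝ} (ha : 0 < a) (hab : a < b) : phi ρ a < phi ρ b := by
  unfold phi
  rcases lt_trichotomy ρ 0 with h | rfl | h
  · simp only [if_neg h.ne, if_neg (not_lt.2 h.le), neg_lt_neg_iff]
    exact Real.rpow_lt_rpow_of_neg ha hab h
  · simpa using Real.log_lt_log ha hab
  · simp only [if_neg h.ne', if_pos h]
    exact Real.rpow_lt_rpow ha.le hab h

lemma phi_concave {ρ : ℝ} (hρ : ρ < 1) {a b ta tb : ℝ} (ha : 0 < a) (hb : 0 < b)
    (hta : 0 ≤ ta) (htb : 0 ≤ tb) (htab : ta + tb = 1) :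
    ta * phi ρ a + tb * phi ρ b ≤ phi ρ (ta * a + tb * b) := by
  unfold phi
  rcases lt_trichotomy ρ 0 with h | rfl | h
  · simp only [if_neg h.ne, if_neg (not_lt.2 h.le)]
    have hc : 0 < ta * a + tb * b := by
      rcases eq_or_lt_of_le hta with h0 | hpos
      · have : tb = 1 := by linarith
        simp [← h0, this, hb]
      · exact add_pos_of_pos_of_nonneg (mul_pos hpos ha) (mul_nonneg htb hb.le)
    have hlog : ta * Real.log a + tb * Real.log b ≤ Real.log (ta * a + tb * b) := by
      have := strictConcaveOn_log_Ioi.concaveOn.2 (Set.mem_Ioi.2 ha) (Set.mem_Ioi.2 hb)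
        hta htb htab
      simpa [smul_eq_mul] using this
    have hmul : ρ * Real.log (ta * a + tb * b) ≤ ρ * (ta * Real.log a + tb * Real.log b) :=
      mul_le_mul_of_nonpos_left hlog h.le
    have hexp : Real.exp (ρ * Real.log (ta * a + tb * b)) ≤
        Real.exp (ta * (ρ * Real.log a) + tb * (ρ * Real.log b)) := by
      apply Real.exp_le_exp.2
      calc ρ * Real.log (ta * a + tb * b) ≤ ρ * (ta * Real.log a + tb * Real.log b) := hmul
        _ = ta * (ρ * Real.log a) + tb * (ρ * Real.log b) := by ring
    have hconv : Real.exp (ta * (ρ * Real.log a) + tb * (ρ * Real.log b)) ≤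
        ta * Real.exp (ρ * Real.log a) + tb * Real.exp (ρ * Real.log b) := by
      have := convexOn_exp.2 (Set.mem_univ (ρ * Real.log a)) (Set.mem_univ (ρ * Real.log b))
        hta htb htab
      simpa [smul_eq_mul] using this
    rw [Real.rpow_def_of_pos ha, Real.rpow_def_of_pos hb, Real.rpow_def_of_pos hc,
      mul_comm (Real.log a) ρ, mul_comm (Real.log b) ρ, mul_comm (Real.log (ta * a + tb * b)) ρ]
    have := hexp.trans hconv
    linarith
  · simp only [if_pos rfl]
    have := strictConcaveOn_log_Ioi.concaveOn.2 (Set.mem_Ioi.2 ha) (Set.mem_Ioi.2 hb)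
      hta htb htab
    simpa [smul_eq_mul] using this
  · simp only [if_neg h.ne', if_pos h]
    have := (Real.concaveOn_rpow h.le hρ.le).2 (Set.mem_Ici.2 ha.le) (Set.mem_Ici.2 hb.le)
      hta htb htab
    simpa [smul_eq_mul] using this


lemma ces_lt_ces {ρ : ℝ} {n : ℕ} {v w : Fin n → ℝ} (hv : ∀ i, 0 < v i) (hw : ∀ i, 0 < w i)
    (h : ∑ i, phi ρ (v i) < ∑ i, phi ρ (w i)) : ces ρ v < ces ρ w := by
  rcases Nat.eq_zero_or_pos n with hn | hn
  · subst hn; simp at h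
  haveI : Nonempty (Fin n) := Fin.pos_iff_nonempty.1 hn
  unfold ces
  rcases lt_trichotomy ρ 0 with hr | rfl | hr
  · have hphi : ∀ t : ℝ, phi ρ t = -(t ^ ρ) := fun t => by
      simp [phi, hr.ne, not_lt.2 hr.le]
    simp only [hphi, Finset.sum_neg_distrib, neg_lt_neg_iff] at h
    have hnz1 : ¬ (ρ < 0 ∧ ∃ i, v i = 0) := by
      rintro ⟨-, i, hi⟩; exact (hv i).ne' hi
    have hnz2 : ¬ (ρ < 0 ∧ ∃ i, w i = 0) := by
      rintro ⟨-, i, hi⟩; exact (hw i).ne' hi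
    simp only [if_neg hr.ne, if_neg hnz1, if_neg hnz2]
    have hwpos : 0 < ∑ i, w i ^ ρ :=
      Finset.sum_pos (fun i _ => Real.rpow_pos_of_pos (hw i) ρ) Finset.univ_nonempty
    exact Real.rpow_lt_rpow_of_neg hwpos h (one_div_neg.2 hr)
  · have hphi : ∀ t : ℝ, phi 0 t = Real.log t := fun t => by simp [phi]
    simp only [hphi] at h
    simp only [if_pos rfl]
    have h1 : Real.log (∏ i, v i) < Real.log (∏ i, w i) := by
      rw [Real.log_prod (fun i _ => (hv i).ne'), Real.log_prod (fun i _ => (hw i).ne')]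
      exact h
    exact (Real.log_lt_log_iff (Finset.prod_pos fun i _ => hv i)
      (Finset.prod_pos fun i _ => hw i)).1 h1
  · have hphi : ∀ t : ℝ, phi ρ t = t ^ ρ := fun t => by simp [phi, hr.ne', hr]
    simp only [hphi] at h
    have hnz1 : ¬ (ρ < 0 ∧ ∃ i, v i = 0) := by rintro ⟨hc, -⟩; exact absurd hc (not_lt.2 hr.le)
    have hnz2 : ¬ (ρ < 0 ∧ ∃ i, w i = 0) := by rintro ⟨hc, -⟩; exact absurd hc (not_lt.2 hr.le)
    simp only [if_neg hr.ne', if_neg hnz1, if_neg hnz2]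
    exact Real.rpow_lt_rpow (Finset.sum_nonneg fun i _ => Real.rpow_nonneg (hv i).le ρ) h
      (one_div_pos.2 hr)

lemma le_of_forall_lt_sub {a b K : ℝ} (h : ∀ ε : ℝ, 0 < ε → a < b - ε * K) : a ≤ b := by
  by_contra hab
  push_neg at hab
  have hK : (0:ℝ) < |K| + 1 := by positivity
  set ε := (a - b) / (2 * (|K| + 1)) with hε
  have hε0 : 0 < ε := div_pos (by linarith) (by linarith)
  have h1 := h ε hε0
  have h2 : ε * (-|K|) ≤ ε * K := mul_le_mul_of_nonneg_left (neg_abs_le K) hε0.le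
  have h3 : ε * (|K| + 1) = (a - b) / 2 := by
    rw [hε]; field_simp
  nlinarith

lemma le_of_forall_one_lt_mul {T S : ℝ} (hS : ∀ c : ℝ, 1 < c → S ≤ c * T) : S ≤ T := by
  by_contra h
  push_neg at h
  rcases le_or_gt T 0 with hT | hT
  · have := hS 2 one_lt_two; linarith
  · have hST : 1 < S / T := (one_lt_div hT).2 h
    have h1 : 1 < (S / T + 1) / 2 := by linarith
    have h2 := hS _ h1
    have h3 : (S / T + 1) / 2 * T = (S + T) / 2 := by field_simp
    rw [h3] at h2
    linarith

lemma nonpos_of_forall_add_mul_lt {p c e : ℝ} (h : ∀ t : ℝ, 0 ≤ t → p + t * e < c) : e ≤ 0 := by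
  by_contra he
  push_neg at he
  have h0 := h 0 le_rfl
  simp at h0
  have h1 := h ((c - p) / e) (div_nonneg (by linarith) he.le)
  rw [div_mul_cancel₀ _ he.ne'] at h1
  linarith

lemma farkas2 {n : ℕ} [Nonempty (Fin n)] (g Q : Fin n → ℝ) (hg : ∀ i, 0 < g i)
    (h : ∀ d : Fin n → ℝ, 0 < ∑ i, g i * d i → 0 ≤ ∑ i, Q i * d i) :
    ∃ c : ℝ, 0 ≤ c ∧ ∀ i, Q i = c * g i := by
  have hG : 0 < ∑ i, g i * g i :=
    Finset.sum_pos (fun i _ => mul_pos (hg i) (hg i)) Finset.univ_nonempty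
  set G := ∑ i, g i * g i with hGdef
  set c := (∑ i, Q i * g i) / G with hc
  have hQg0 : 0 ≤ ∑ i, Q i * g i := h g hG
  refine ⟨c, div_nonneg hQg0 hG.le, ?_⟩
  set r := fun i => Q i - c * g i with hr
  have hrg : ∑ i, g i * r i = 0 := by
    have e1 : ∀ i, g i * r i = Q i * g i - c * (g i * g i) := fun i => by
      simp only [hr]; ring
    simp only [e1]
    rw [Finset.sum_sub_distrib, ← Finset.mul_sum, ← hGdef, hc, div_mul_cancel₀ _ hG.ne']
    ring
  by_cases hR : ∀ i, r i = 0
  · intro i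
    have := hR i
    simp only [hr] at this
    linarith
  · exfalso
    have hRpos : 0 < ∑ i, r i * r i := by
      push_neg at hR
      obtain ⟨i0, hi0⟩ := hR
      apply Finset.sum_pos' (fun i _ => mul_self_nonneg (r i))
      exact ⟨i0, Finset.mem_univ _, mul_self_pos.2 hi0⟩
    set Rr := ∑ i, r i * r i with hRr
    set A := ∑ i, Q i * g i with hA
    set ε := Rr / (2 * (|A| + 1)) with hεdef
    have hε : 0 < ε := div_pos hRpos (by positivity)
    set d := fun i => ε * g i - r i with hd
    have hgd : 0 < ∑ i, g i * d i := by
      have e1 : ∀ i, g i * d i = ε * (g i * g i) - g i * r i := fun i => by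
        simp only [hd]; ring
      simp only [e1]
      rw [Finset.sum_sub_distrib, ← Finset.mul_sum, ← hGdef, hrg, sub_zero]
      exact mul_pos hε hG
    have hQd := h d hgd
    have hQr : ∑ i, Q i * r i = Rr := by
      have e1 : ∀ i, Q i * r i = c * (g i * r i) + r i * r i := fun i => by
        simp only [hr]; ring
      simp only [e1]
      rw [Finset.sum_add_distrib, ← Finset.mul_sum, hrg, mul_zero, zero_add, ← hRr]
    have hQdval : ∑ i, Q i * d i = ε * A - Rr := by
      have e1 : ∀ i, Q i * d i = ε * (Q i * g i) - Q i * r i := fun i => by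
        simp only [hd]; ring
      simp only [e1]
      rw [Finset.sum_sub_distrib, ← Finset.mul_sum, hQr, ← hA]
    rw [hQdval] at hQd
    have h5 : ε * A ≤ ε * |A| := mul_le_mul_of_nonneg_left (le_abs_self A) hε.le
    have h6 : ε * (2 * (|A| + 1)) = Rr := by
      rw [hεdef]; field_simp
    nlinarith [abs_nonneg A]
  


lemma util_canon {n m : ℕ} (R : Fin n → Finset (Fin m)) (hR : ∀ i, (R i).Nonempty)
    (v : Fin n → ℝ) :
    util R (fun i j => if j ∈ R i then v i else 0) = v := by
  funext i
  unfold util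
  apply le_antisymm
  · obtain ⟨j, hj⟩ := hR i
    have := bundleUtil_le (Ri := R i) (fun j => if j ∈ R i then v i else 0) hj
    simpa [hj] using this
  · exact le_bundleUtil _ (hR i) (fun j hj => by simp [hj])

lemma util_nonneg {n m : ℕ} (R : Fin n → Finset (Fin m)) (hR : ∀ i, (R i).Nonempty)
    {x : Fin n → Fin m → ℝ} (hx : ∀ i j, 0 ≤ x i j) (i : Fin n) : 0 ≤ util R x i :=
  le_bundleUtil _ (hR i) (fun j _ => hx i j)

lemma util_le {n m : ℕ} (R : Fin n → Finset (Fin m)) (x : Fin n → Fin m → ℝ)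
    {i : Fin n} {j : Fin m} (hj : j ∈ R i) : util R x i ≤ x i j :=
  bundleUtil_le _ hj

lemma canon_valid {n m : ℕ} (s : Fin m → ℝ) (R : Fin n → Finset (Fin m))
    {v : Fin n → ℝ} (hv : ∀ i, 0 ≤ v i)
    (hsum : ∀ j, ∑ i, (if j ∈ R i then v i else 0) ≤ s j) :
    validAlloc s (fun i j => if j ∈ R i then v i else 0) := by
  refine ⟨fun i j => ?_, hsum⟩
  simp only
  split_ifs with h
  · exact hv i
  · exact le_rfl

lemma util_pos_of_maxCES {n m : ℕ} (hn : 0 < n) {s : Fin m → ℝ} (hs : ∀ j, 0 < s j)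
    {R : Fin n → Finset (Fin m)} (hR : ∀ i, (R i).Nonempty) {ρ : ℝ} (hρ : ρ < 1)
    {x : Fin n → Fin m → ℝ} (hx : maxCES ρ s R x) (k : Fin n) : 0 < util R x k := by
  haveI : Nonempty (Fin n) := Fin.pos_iff_nonempty.1 hn
  obtain ⟨⟨hx0, hxs⟩, hopt⟩ := hx
  by_contra hk
  push_neg at hk
  have huk : util R x k = 0 := le_antisymm hk (util_nonneg R hR hx0 k)
  obtain ⟨j0, hj0⟩ := hR k
  haveI : Nonempty (Fin m) := ⟨j0⟩
  set δ := (Finset.univ.inf' Finset.univ_nonempty s) / n with hδdef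
  have hinf : 0 < Finset.univ.inf' Finset.univ_nonempty s :=
    (Finset.lt_inf'_iff _).2 fun j _ => hs j
  have hδ : 0 < δ := div_pos hinf (by exact_mod_cast hn)
  have hδs : ∀ j, (n : ℝ) * δ ≤ s j := by
    intro j
    have h1 : Finset.univ.inf' Finset.univ_nonempty s ≤ s j :=
      Finset.inf'_le _ (Finset.mem_univ j)
    have h2 : (n:ℝ) * δ = Finset.univ.inf' Finset.univ_nonempty s := by
      rw [hδdef]; field_simp
    linarith
  have hsumδ : ∀ j, ∑ i, (if j ∈ R i then δ else 0) ≤ s j := by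
    intro j
    calc ∑ i, (if j ∈ R i then δ else 0) ≤ ∑ _i : Fin n, δ := by
          apply Finset.sum_le_sum; intro i _; split_ifs; exacts [le_rfl, hδ.le]
      _ = (n:ℝ) * δ := by
          rw [Finset.sum_const, Finset.card_univ, Fintype.card_fin, nsmul_eq_mul]
      _ ≤ s j := hδs j
  set u := util R x with hu
  have hun : ∀ i, 0 ≤ u i := util_nonneg R hR hx0
  have hAu : ∀ j, ∑ i, (if j ∈ R i then u i else 0) ≤ s j := by
    intro j
    calc ∑ i, (if j ∈ R i then u i else 0) ≤ ∑ i, x i j := by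
          apply Finset.sum_le_sum; intro i _; split_ifs with h
          · exact util_le R x h
          · exact hx0 i j
      _ ≤ s j := hxs j
  rcases le_or_gt ρ 0 with hρ0 | hρ0
  · have hval := canon_valid s R (v := fun _ => δ) (fun _ => hδ.le) hsumδ
    have hle := hopt _ hval
    rw [util_canon R hR] at hle
    rcases eq_or_lt_of_le hρ0 with hρe | hρneg
    · subst hρe
      simp only [ces, eq_self_iff_true, if_true] at hle
      have h1 : ∏ i : Fin n, u i = 0 := Finset.prod_eq_zero (Finset.mem_univ k) huk
      rw [h1] at hle
      have h2 : (0:ℝ) < ∏ _i : Fin n, δ := Finset.prod_pos (fun _ _ => hδ)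
      linarith
    · have hces_u : ces ρ u = 0 := by
        simp only [ces, if_neg hρneg.ne]
        rw [if_pos ⟨hρneg, k, huk⟩]
      have hces_δ : 0 < ces ρ (fun _ : Fin n => δ) := by
        have hcond : ¬ (ρ < 0 ∧ ∃ i : Fin n, (fun _ : Fin n => δ) i = 0) := by
          rintro ⟨-, i, hi⟩; exact hδ.ne' hi
        simp only [ces, if_neg hρneg.ne, if_neg hcond]
        exact Real.rpow_pos_of_pos
          (Finset.sum_pos (fun i _ => Real.rpow_pos_of_pos hδ ρ) Finset.univ_nonempty) _
      rw [hces_u] at hle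
      linarith
  · -- 0 < ρ < 1
    set M := ∑ i, u i ^ ρ with hM
    have hM0 : 0 ≤ M := Finset.sum_nonneg fun i _ => Real.rpow_nonneg (hun i) ρ
    set r := δ ^ ρ / (M + 1) with hrdef
    have hrpos : 0 < r := div_pos (Real.rpow_pos_of_pos hδ ρ) (by linarith)
    set t1 := r ^ (1 / (1 - ρ)) with ht1
    have ht1pos : 0 < t1 := Real.rpow_pos_of_pos hrpos _
    set t := min (1/2 : ℝ) (t1 / 2) with htdef
    have htpos : 0 < t := lt_min (by norm_num) (by linarith)
    have htlt1 : t < 1 := lt_of_le_of_lt (min_le_left _ _) (by norm_num)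
    have htt1 : t < t1 := lt_of_le_of_lt (min_le_right _ _) (by linarith)
    have hkey : t ^ (1 - ρ) < r := by
      have h1 : t ^ (1-ρ) < t1 ^ (1-ρ) := Real.rpow_lt_rpow htpos.le htt1 (by linarith)
      have h2 : t1 ^ (1-ρ) = r := by
        rw [ht1, ← Real.rpow_mul hrpos.le, one_div,
          inv_mul_cancel₀ (by linarith : (1:ℝ) - ρ ≠ 0), Real.rpow_one]
      linarith
    set v := fun i => (1 - t) * u i + t * δ with hvdef
    have hv0 : ∀ i, 0 ≤ v i := fun i =>
      add_nonneg (mul_nonneg (by linarith) (hun i)) (mul_nonneg htpos.le hδ.le)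
    have hvsum : ∀ j, ∑ i, (if j ∈ R i then v i else 0) ≤ s j := by
      intro j
      have e1 : ∀ i, (if j ∈ R i then v i else 0)
          = (1-t) * (if j ∈ R i then u i else 0) + t * (if j ∈ R i then δ else 0) := by
        intro i; split_ifs <;> ring
      simp only [e1]
      rw [Finset.sum_add_distrib, ← Finset.mul_sum, ← Finset.mul_sum]
      have h1 := mul_le_mul_of_nonneg_left (hAu j) (by linarith : (0:ℝ) ≤ 1 - t)
      have h2 := mul_le_mul_of_nonneg_left (hsumδ j) htpos.le
      nlinarith
    have hval := canon_valid s R hv0 hvsum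
    have hle := hopt _ hval
    rw [util_canon R hR] at hle
    have hces : ∀ w : Fin n → ℝ, ces ρ w = (∑ i, w i ^ ρ) ^ (1/ρ) := by
      intro w
      have hc2 : ¬ (ρ < 0 ∧ ∃ i, w i = 0) := by
        rintro ⟨hc, -⟩; exact absurd hc (not_lt.2 hρ0.le)
      simp only [ces, if_neg hρ0.ne', if_neg hc2]
    rw [hces, hces] at hle
    have hsum_lt : M < ∑ i, v i ^ ρ := by
      have hsplit_v : ∑ i, v i ^ ρ = v k ^ ρ + ∑ i ∈ Finset.univ.erase k, v i ^ ρ :=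
        (Finset.add_sum_erase _ _ (Finset.mem_univ k)).symm
      have hsplit_u : M = ∑ i ∈ Finset.univ.erase k, u i ^ ρ := by
        rw [hM, ← Finset.add_sum_erase _ (fun i => u i ^ ρ) (Finset.mem_univ k), huk,
          Real.zero_rpow hρ0.ne', zero_add]
      have hterm : ∀ i ∈ Finset.univ.erase k, (1-t) * u i ^ ρ ≤ v i ^ ρ := by
        intro i _
        have h1 : ((1-t) * u i) ^ ρ ≤ v i ^ ρ := by
          apply Real.rpow_le_rpow (mul_nonneg (by linarith) (hun i)) _ hρ0.le
          have : 0 ≤ t * δ := mul_nonneg htpos.le hδ.le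
          simp only [hvdef]; linarith
        have h2 : ((1-t) * u i) ^ ρ = (1-t)^ρ * u i ^ ρ :=
          Real.mul_rpow (by linarith) (hun i)
        have h3 : (1-t) ≤ (1-t) ^ ρ := by
          have := Real.rpow_le_rpow_of_exponent_ge (by linarith : (0:ℝ) < 1 - t)
            (by linarith : (1:ℝ) - t ≤ 1) hρ.le
          rwa [Real.rpow_one] at this
        nlinarith [Real.rpow_nonneg (hun i) ρ]
      have hsum_ge : (1-t) * ∑ i ∈ Finset.univ.erase k, u i ^ ρ
          ≤ ∑ i ∈ Finset.univ.erase k, v i ^ ρ := by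
        rw [Finset.mul_sum]; exact Finset.sum_le_sum hterm
      have hvk : v k ^ ρ = t ^ ρ * δ ^ ρ := by
        simp only [hvdef, huk, mul_zero, zero_add]
        exact Real.mul_rpow htpos.le hδ.le
      have hbig : t * (M + 1) < t ^ ρ * δ ^ ρ := by
        have h1 : t ^ (1-ρ) * (M+1) < δ ^ ρ := by
          rw [hrdef] at hkey
          exact (lt_div_iff₀ (by linarith)).1 hkey
        have h2 := mul_lt_mul_of_pos_left h1 (Real.rpow_pos_of_pos htpos ρ)
        have h3 : t ^ ρ * t ^ (1-ρ) = t := by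
          rw [← Real.rpow_add htpos]; norm_num
        nlinarith
      nlinarith [hsplit_v, hsum_ge, hvk, hbig, hsplit_u, htpos]
    have := Real.rpow_lt_rpow hM0 hsum_lt (one_div_pos.2 hρ0)
    rw [← hM] at hle
    linarith

/-- for every `ρ < 1` and every maximum-CES-welfare allocation `x`, there
exist nonnegative constants `q_j` such that `(x, g)` with `g_j(y) = q_j · y^(1-ρ)` is a
price curve equilibrium. -/
theorem ces_price_curves {n m : ℕ} (s : Fin m → ℝ) (hs : ∀ j, 0 < s j)
    (R : Fin n → Finset (Fin m)) (hR : ∀ i, (R i).Nonempty)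
    (ρ : ℝ) (hρ : ρ < 1)
    (x : Fin n → Fin m → ℝ) (hx : maxCES ρ s R x) :
    ∃ q : Fin m → ℝ, (∀ j, 0 ≤ q j) ∧
      isPCE s R x (fun j y => q j * y ^ (1 - ρ)) := by
  rcases Nat.eq_zero_or_pos n with hn | hn
  · subst hn
    refine ⟨fun _ => 0, fun j => le_rfl, fun i => i.elim0, hx.1.2, ?_⟩
    intro j hj
    exact absurd (fun y _ => by norm_num) hj
  haveI : Nonempty (Fin n) := Fin.pos_iff_nonempty.1 hn
  have hupos : ∀ i, 0 < util R x i := util_pos_of_maxCES hn hs hR hρ hx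
  obtain ⟨⟨hx0, hxs⟩, hopt⟩ := hx
  set u := util R x with hu
  have hun : ∀ i, 0 ≤ u i := fun i => (hupos i).le
  have hule : ∀ i j, j ∈ R i → u i ≤ x i j := fun i j hj => util_le R x hj
  set A : (Fin n → ℝ) → Fin m → ℝ := fun v j => ∑ i, if j ∈ R i then v i else 0 with hA
  have hAus : ∀ j, A u j ≤ s j := by
    intro j
    have h2 : ∀ i, (if j ∈ R i then u i else 0) ≤ x i j := fun i => by
      split_ifs with h; exacts [hule i j h, hx0 i j]
    calc A u j ≤ ∑ i, x i j := by
          simp only [hA]; exact Finset.sum_le_sum fun i _ => h2 i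
      _ ≤ s j := hxs j
  set F0 : ℝ := ∑ i, phi ρ (u i) with hF0
  set B : Set (Fin n → ℝ) := {v | (∀ i, 0 < v i) ∧ F0 < ∑ i, phi ρ (v i)} with hB
  set T : Set (Fin m → ℝ) := {z | ∃ v ∈ B, ∀ j, A v j < z j} with hT
  have hTopen : IsOpen T := by
    have he0 : T = ⋃ v ∈ B, {z : Fin m → ℝ | ∀ j, A v j < z j} := by
      ext z
      simp only [hT, Set.mem_setOf_eq, Set.mem_iUnion, exists_prop]
    rw [he0]
    apply isOpen_biUnion
    intro v _
    have he : {z : Fin m → ℝ | ∀ j, A v j < z j} = Set.univ.pi (fun j => Set.Ioi (A v j)) := by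
      ext z; simp [Set.mem_pi]
    rw [he]
    exact isOpen_set_pi Set.finite_univ (fun j _ => isOpen_Ioi)
  have hTconv : Convex ℝ T := by
    intro z1 hz1 z2 hz2 a b ha hb hab
    rcases eq_or_lt_of_le ha with ha0 | ha'
    · have hb1 : b = 1 := by linarith
      subst hb1
      simp only [← ha0, zero_smul, one_smul, zero_add]
      exact hz2
    rcases eq_or_lt_of_le hb with hb0 | hb'
    · have ha1 : a = 1 := by linarith
      subst ha1
      simp only [← hb0, zero_smul, one_smul, add_zero]
      exact hz1
    rw [hT] at hz1 hz2 ⊢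
    obtain ⟨v1, hv1B, hv1z⟩ := hz1
    obtain ⟨v2, hv2B, hv2z⟩ := hz2
    rw [hB] at hv1B hv2B
    obtain ⟨hv1p, hv1f⟩ := hv1B
    obtain ⟨hv2p, hv2f⟩ := hv2B
    refine ⟨fun i => a * v1 i + b * v2 i, ?_, ?_⟩
    · rw [hB]
      refine ⟨fun i => add_pos (mul_pos ha' (hv1p i)) (mul_pos hb' (hv2p i)), ?_⟩
      have hcpt : ∀ i, a * phi ρ (v1 i) + b * phi ρ (v2 i)
          ≤ phi ρ (a * v1 i + b * v2 i) := fun i =>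
        phi_concave hρ (hv1p i) (hv2p i) ha hb hab
      calc F0 = a * F0 + b * F0 := by rw [← add_mul, hab, one_mul]
        _ < a * (∑ i, phi ρ (v1 i)) + b * (∑ i, phi ρ (v2 i)) :=
            add_lt_add (mul_lt_mul_of_pos_left hv1f ha') (mul_lt_mul_of_pos_left hv2f hb')
        _ = ∑ i, (a * phi ρ (v1 i) + b * phi ρ (v2 i)) := by
            rw [Finset.sum_add_distrib, Finset.mul_sum, Finset.mul_sum]
        _ ≤ ∑ i, phi ρ (a * v1 i + b * v2 i) := Finset.sum_le_sum (fun i _ => hcpt i)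
    · intro j
      have hAc : A (fun i => a * v1 i + b * v2 i) j = a * A v1 j + b * A v2 j := by
        simp only [hA]
        rw [Finset.mul_sum, Finset.mul_sum, ← Finset.sum_add_distrib]
        apply Finset.sum_congr rfl; intro i _; split_ifs <;> ring
      have hzc : (a • z1 + b • z2) j = a * z1 j + b * z2 j := by
        simp [smul_eq_mul]
      rw [hAc, hzc]
      exact add_lt_add (mul_lt_mul_of_pos_left (hv1z j) ha')
        (mul_lt_mul_of_pos_left (hv2z j) hb')
  have hsT : s ∉ T := by
    intro hmem
    rw [hT] at hmem
    obtain ⟨v, hvB, hvz⟩ := hmem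
    rw [hB] at hvB
    obtain ⟨hvp, hvf⟩ := hvB
    have hval : validAlloc s (fun i j => if j ∈ R i then v i else 0) := by
      apply canon_valid s R (fun i => (hvp i).le)
      intro j
      have := (hvz j).le
      simpa [hA] using this
    have hle := hopt _ hval
    rw [util_canon R hR] at hle
    have hlt : ces ρ u < ces ρ v := by
      apply ces_lt_ces hupos hvp
      rw [← hF0]; exact hvf
    linarith
  obtain ⟨φ, c, hφT, hφs'⟩ := geometric_hahn_banach_open hTconv hTopen (convex_singleton s)
    (Set.disjoint_singleton_right.2 hsT)
  have hφs : c ≤ φ s := hφs' s rfl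
  set lam : Fin m → ℝ := fun j => -φ (Pi.single j 1 : Fin m → ℝ) with hlam
  have hφeval : ∀ z : Fin m → ℝ, φ z = -∑ j, lam j * z j := by
    intro z
    have hsingle : ∀ j, z j • (Pi.single j 1 : Fin m → ℝ) = Pi.single j (z j) := fun j => by
      rw [← Pi.single_smul, smul_eq_mul, mul_one]
    have hzdec : z = ∑ j, z j • (Pi.single j 1 : Fin m → ℝ) := by
      simp only [hsingle]
      exact (Finset.univ_sum_single z).symm
    calc φ z = φ (∑ j, z j • (Pi.single j 1 : Fin m → ℝ)) := by rw [← hzdec]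
      _ = ∑ j, z j • φ ((Pi.single j 1 : Fin m → ℝ)) := by
          rw [map_sum]
          exact Finset.sum_congr rfl fun j _ => by rw [map_smul]
      _ = -∑ j, lam j * z j := by
          rw [← Finset.sum_neg_distrib]
          apply Finset.sum_congr rfl
          intro j _
          simp only [hlam, smul_eq_mul]
          ring
  have h2uB : ∀ c' : ℝ, 1 < c' → (fun i => c' * u i) ∈ B := by
    intro c' hc'
    rw [hB]
    refine ⟨fun i => mul_pos (by linarith) (hupos i), ?_⟩
    rw [hF0]
    apply Finset.sum_lt_sum_of_nonempty Finset.univ_nonempty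
    intro i _
    exact phi_lt_phi (hupos i) ((lt_mul_iff_one_lt_left (hupos i)).2 hc')
  set z0 : Fin m → ℝ := fun j => A (fun i => 2 * u i) j + 1 with hz0
  have hz0T : z0 ∈ T := by
    rw [hT]
    exact ⟨_, h2uB 2 one_lt_two, fun j => lt_add_one _⟩
  have hlam0 : ∀ j, 0 ≤ lam j := by
    intro j
    have h1 : ∀ t : ℝ, 0 ≤ t → φ z0 + t * φ (Pi.single j 1 : Fin m → ℝ) < c := by
      intro t ht
      have hsnn : (0:ℝ) ≤ (Pi.single j 1 : Fin m → ℝ) j → True := fun _ => trivial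
      have hmem : z0 + t • (Pi.single j 1 : Fin m → ℝ) ∈ T := by
        rw [hT]
        refine ⟨_, h2uB 2 one_lt_two, ?_⟩
        intro j'
        have he : (z0 + t • (Pi.single j 1 : Fin m → ℝ)) j' = z0 j' + t * (Pi.single j 1 : Fin m → ℝ) j' := by
          simp [smul_eq_mul]
        rw [he]
        have h0 : (0:ℝ) ≤ (Pi.single j 1 : Fin m → ℝ) j' := by
          rw [Pi.single_apply]; split_ifs <;> norm_num
        have h2 : A (fun i => 2 * u i) j' < z0 j' := by
          rw [hz0]; exact lt_add_one _
        nlinarith [mul_nonneg ht h0]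
      have := hφT _ hmem
      rwa [map_add, map_smul, smul_eq_mul] at this
    have h2 := nonpos_of_forall_add_mul_lt h1
    simp only [hlam]
    linarith
  set S := ∑ j, lam j * s j with hS
  have hlamB : ∀ v ∈ B, S ≤ ∑ j, lam j * A v j := by
    intro v hvB
    set L1 := ∑ j, lam j with hL1
    have h3 : ∀ ε : ℝ, φ (fun j => A v j + ε) = -∑ j, lam j * A v j - ε * L1 := by
      intro ε
      rw [hφeval]
      have he : ∑ j, lam j * (A v j + ε) = (∑ j, lam j * A v j) + ε * L1 := by
        simp only [mul_add]
        rw [Finset.sum_add_distrib]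
        congr 1
        rw [← Finset.sum_mul, mul_comm, hL1]
      rw [he]; ring
    have h2 : ∀ ε : ℝ, 0 < ε → φ (fun j => A v j + ε) < c := by
      intro ε hε
      apply hφT
      rw [hT]
      exact ⟨v, hvB, fun j => lt_add_of_pos_right _ hε⟩
    have hSc : S ≤ -c := by
      have hps : φ s = -S := by rw [hφeval, hS]
      linarith
    have h4 : -c ≤ ∑ j, lam j * A v j := by
      apply le_of_forall_lt_sub (K := -L1)
      intro ε hε
      have h5 := h2 ε hε
      rw [h3 ε] at h5
      have h6 : (∑ j, lam j * A v j) - ε * -L1 = (∑ j, lam j * A v j) + ε * L1 := by ring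
      rw [h6]
      linarith
    linarith
  have hlamne : ∃ j, 0 < lam j := by
    by_contra hno
    push_neg at hno
    have hz : ∀ j, lam j = 0 := fun j => le_antisymm (hno j) (hlam0 j)
    have h1 := hφT z0 hz0T
    have h2 : φ z0 = 0 := by rw [hφeval]; simp [hz]
    have h3 : φ s = 0 := by rw [hφeval]; simp [hz]
    rw [h2] at h1; rw [h3] at hφs
    linarith
  have hSpos : 0 < S := by
    obtain ⟨j1, hj1⟩ := hlamne
    rw [hS]
    exact Finset.sum_pos' (fun j _ => mul_nonneg (hlam0 j) (hs j).le)
      ⟨j1, Finset.mem_univ _, mul_pos hj1 (hs j1)⟩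
  set Q : Fin n → ℝ := fun i => ∑ j ∈ R i, lam j with hQ
  have hQA : ∀ v : Fin n → ℝ, ∑ j, lam j * A v j = ∑ i, Q i * v i := by
    intro v
    simp only [hA, Finset.mul_sum]
    rw [Finset.sum_comm]
    apply Finset.sum_congr rfl
    intro i _
    have e1 : ∀ j, lam j * (if j ∈ R i then v i else 0)
        = (if j ∈ R i then lam j * v i else 0) := fun j => by split_ifs <;> ring
    simp only [e1]
    rw [Finset.sum_ite_mem, Finset.univ_inter, ← Finset.sum_mul]
  have hQu_le : ∑ i, Q i * u i ≤ S := by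
    rw [← hQA u, hS]
    exact Finset.sum_le_sum fun j _ => mul_le_mul_of_nonneg_left (hAus j) (hlam0 j)
  have hQu_ge : S ≤ ∑ i, Q i * u i := by
    apply le_of_forall_one_lt_mul
    intro c' hc'
    have h1 := hlamB _ (h2uB c' hc')
    rw [hQA] at h1
    have e : ∑ i, Q i * (c' * u i) = c' * ∑ i, Q i * u i := by
      rw [Finset.mul_sum]
      apply Finset.sum_congr rfl
      intro i _; ring
    rw [e] at h1
    exact h1
  have hQu_eq : ∑ i, Q i * u i = S := le_antisymm hQu_le hQu_ge
  have hcs : ∀ j, 0 < lam j → A u j = s j := by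
    intro j hlj
    have hsum0 : ∑ j', lam j' * (s j' - A u j') = 0 := by
      have he : ∑ j', lam j' * (s j' - A u j') = S - ∑ j', lam j' * A u j' := by
        simp only [mul_sub]
        rw [Finset.sum_sub_distrib, hS]
      rw [he, hQA u, hQu_eq, sub_self]
    have hterm := (Finset.sum_eq_zero_iff_of_nonneg
      (fun j' _ => mul_nonneg (hlam0 j') (sub_nonneg.2 (hAus j')))).1 hsum0 j (Finset.mem_univ j)
    rcases mul_eq_zero.1 hterm with h | h
    · exact absurd h hlj.ne'
    · linarith
  have hQd : ∀ d : Fin n → ℝ,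
      0 < ∑ i, kk ρ * u i ^ (ρ-1) * d i → 0 ≤ ∑ i, Q i * d i := by
    intro d hd
    set Fn : ℝ → ℝ := fun t => ∑ i, phi ρ (u i + t * d i) with hFn
    have hder : HasDerivAt Fn (∑ i, kk ρ * u i ^ (ρ-1) * d i) 0 := by
      apply HasDerivAt.fun_sum
      intro i _
      have hinner : HasDerivAt (fun t : ℝ => u i + t * d i) (d i) 0 := by
        simpa using ((hasDerivAt_id (0:ℝ)).mul_const (d i)).const_add (u i)
      have houter : HasDerivAt (phi ρ) (kk ρ * u i ^ (ρ-1)) (u i + 0 * d i) := by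
        have h0 : u i + 0 * d i = u i := by ring
        rw [h0]
        exact phi_hasDerivAt (hupos i)
      exact houter.comp 0 hinner
    have hslope : Filter.Tendsto (slope Fn 0) (nhdsWithin 0 (Set.Ioi 0))
        (nhds (∑ i, kk ρ * u i ^ (ρ-1) * d i)) :=
      (hasDerivAt_iff_tendsto_slope.1 hder).mono_left
        (nhdsWithin_mono _ (fun t ht => Set.mem_compl_singleton_iff.2 (ne_of_gt ht)))
    have hev1 : ∀ᶠ t in nhdsWithin 0 (Set.Ioi 0), 0 < slope Fn 0 t :=
      hslope.eventually (eventually_gt_nhds hd)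
    have hev2 : ∀ᶠ t in nhdsWithin 0 (Set.Ioi 0), ∀ i, 0 < u i + t * d i := by
      have hin : ∀ᶠ t in nhds (0:ℝ), ∀ i, 0 < u i + t * d i := by
        rw [Filter.eventually_all]
        intro i
        have hcont : Filter.Tendsto (fun t : ℝ => u i + t * d i) (nhds 0)
            (nhds (u i + 0 * d i)) :=
          ((continuous_const.add (continuous_id.mul continuous_const)).tendsto 0)
        exact hcont.eventually (eventually_gt_nhds (by simpa using hupos i))
      exact hin.filter_mono nhdsWithin_le_nhds
    obtain ⟨t, ⟨hslope_t, hpos_t⟩, htIoi⟩ :=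
      ((hev1.and hev2).and eventually_mem_nhdsWithin).exists
    have ht0 : (0:ℝ) < t := htIoi
    have hFt : Fn 0 < Fn t := by
      have h1 : slope Fn 0 t = (Fn t - Fn 0) / t := by
        rw [slope_def_field, sub_zero]
      rw [h1] at hslope_t
      have h2 : Fn t - Fn 0 = (Fn t - Fn 0) / t * t := (div_mul_cancel₀ _ ht0.ne').symm
      nlinarith [mul_pos hslope_t ht0]
    have hvB : (fun i => u i + t * d i) ∈ B := by
      rw [hB]
      refine ⟨hpos_t, ?_⟩
      have hFn0 : Fn 0 = F0 := by
        rw [hFn, hF0]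
        apply Finset.sum_congr rfl
        intro i _
        norm_num
      rw [← hFn0]
      exact hFt
    have h5 := hlamB _ hvB
    rw [hQA] at h5
    have h6 : ∑ i, Q i * (u i + t * d i) = (∑ i, Q i * u i) + t * ∑ i, Q i * d i := by
      rw [Finset.mul_sum, ← Finset.sum_add_distrib]
      apply Finset.sum_congr rfl
      intro i _; ring
    rw [h6, hQu_eq] at h5
    by_contra hXneg
    push_neg at hXneg
    have : t * ∑ i, Q i * d i < 0 := mul_neg_of_pos_of_neg ht0 hXneg
    linarith
  obtain ⟨cc, hcc0, hQg⟩ := farkas2 (fun i => kk ρ * u i ^ (ρ-1)) Q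
    (fun i => mul_pos kk_pos (Real.rpow_pos_of_pos (hupos i) _)) hQd
  have hccpos : 0 < cc := by
    rcases eq_or_lt_of_le hcc0 with h0 | hpos
    · exfalso
      have hz : ∑ i, Q i * u i = 0 := by
        apply Finset.sum_eq_zero
        intro i _
        rw [hQg i, ← h0]
        ring
      rw [hQu_eq] at hz
      linarith
    · exact hpos
  set D := cc * kk ρ with hD
  have hDpos : 0 < D := mul_pos hccpos kk_pos
  set q : Fin m → ℝ := fun j => lam j / D with hq
  have hq0 : ∀ j, 0 ≤ q j := fun j => div_nonneg (hlam0 j) hDpos.le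
  have hQsum : ∀ i, ∑ j ∈ R i, q j = u i ^ (ρ - 1) := by
    intro i
    have h1 : ∑ j ∈ R i, q j = Q i / D := by
      simp only [hq]
      rw [← Finset.sum_div]
    rw [h1, hQg i, hD]
    have h2 : cc * (kk ρ * u i ^ (ρ-1)) = cc * kk ρ * u i ^ (ρ-1) := by ring
    rw [h2, mul_div_cancel_left₀ _ (by rw [← hD]; exact hDpos.ne')]
  have hforce : ∀ j, 0 < lam j →
      (∑ i, x i j = s j ∧ ∀ i, x i j = if j ∈ R i then u i else 0) := by
    intro j hlj
    have h1 : A u j = s j := hcs j hlj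
    have h2 : ∀ i, (if j ∈ R i then u i else 0) ≤ x i j := fun i => by
      split_ifs with h; exacts [hule i j h, hx0 i j]
    have h3 : ∑ i, (x i j - (if j ∈ R i then u i else 0)) = (∑ i, x i j) - A u j := by
      rw [Finset.sum_sub_distrib]
    have h4 : ∑ i, (x i j - (if j ∈ R i then u i else 0)) ≤ 0 := by
      rw [h3, h1]
      have := hxs j
      linarith
    have h5 : ∑ i, (x i j - (if j ∈ R i then u i else 0)) = 0 :=
      le_antisymm h4 (Finset.sum_nonneg fun i _ => sub_nonneg.2 (h2 i))
    have h6 := (Finset.sum_eq_zero_iff_of_nonneg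
      (fun i _ => sub_nonneg.2 (h2 i))).1 h5
    constructor
    · have h7 : (∑ i, x i j) - A u j = 0 := by rw [← h3, h5]
      rw [← h1]; linarith
    · intro i
      have := h6 i (Finset.mem_univ i)
      linarith
  have hcost : ∀ i, ∑ j, q j * (x i j) ^ (1 - ρ) = 1 := by
    intro i
    have e1 : ∀ j, q j * (x i j) ^ (1-ρ) = (if j ∈ R i then q j * u i ^ (1-ρ) else 0) := by
      intro j
      rcases eq_or_lt_of_le (hlam0 j) with h0 | hpos
      · have hq0' : q j = 0 := by simp [hq, ← h0]
        rw [hq0', zero_mul]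
        split_ifs <;> simp
      · have hxe := (hforce j hpos).2 i
        rw [hxe]
        split_ifs with h
        · rfl
        · rw [Real.zero_rpow (by linarith : (1:ℝ)-ρ ≠ 0), mul_zero]
    calc ∑ j, q j * (x i j) ^ (1-ρ)
        = ∑ j, (if j ∈ R i then q j * u i ^ (1-ρ) else 0) :=
          Finset.sum_congr rfl fun j _ => e1 j
      _ = ∑ j ∈ R i, q j * u i ^ (1-ρ) := by rw [Finset.sum_ite_mem, Finset.univ_inter]
      _ = (∑ j ∈ R i, q j) * u i ^ (1-ρ) := by rw [Finset.sum_mul]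
      _ = u i ^ (ρ-1) * u i ^ (1-ρ) := by rw [hQsum i]
      _ = 1 := by rw [← Real.rpow_add (hupos i)]; norm_num
  refine ⟨q, hq0, ?_, hxs, ?_⟩
  · intro i
    refine ⟨hx0 i, ?_, ?_⟩
    · have hce : cost (fun j y => q j * y ^ (1 - ρ)) (x i) = ∑ j, q j * (x i j) ^ (1-ρ) := by
        simp [cost]
      rw [hce, hcost i]
    · intro yi hyi0 hyic
      set v := bundleUtil (R i) yi with hv
      have hv0 : 0 ≤ v := le_bundleUtil _ (hR i) fun j _ => hyi0 j
      have hvle : ∀ j ∈ R i, v ≤ yi j := fun j hj => bundleUtil_le _ hj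
      have hyic' : ∑ j, q j * (yi j) ^ (1-ρ) ≤ 1 := by
        have hce : cost (fun j y => q j * y ^ (1 - ρ)) yi = ∑ j, q j * (yi j) ^ (1-ρ) := by
          simp [cost]
        rwa [hce] at hyic
      have hc1 : v ^ (1-ρ) * u i ^ (ρ-1) ≤ 1 := by
        have h1 : ∑ j ∈ R i, q j * v ^ (1-ρ) ≤ ∑ j ∈ R i, q j * (yi j) ^ (1-ρ) :=
          Finset.sum_le_sum fun j hj => mul_le_mul_of_nonneg_left
            (Real.rpow_le_rpow hv0 (hvle j hj) (by linarith)) (hq0 j)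
        have h2 : ∑ j ∈ R i, q j * (yi j) ^ (1-ρ) ≤ ∑ j, q j * (yi j) ^ (1-ρ) :=
          Finset.sum_le_sum_of_subset_of_nonneg (Finset.subset_univ _)
            (fun j _ _ => mul_nonneg (hq0 j) (Real.rpow_nonneg (hyi0 j) _))
        have h3 : ∑ j ∈ R i, q j * v ^ (1-ρ) = v ^ (1-ρ) * u i ^ (ρ-1) := by
          rw [← Finset.sum_mul, hQsum i]
          ring
        linarith
      show v ≤ u i
      by_contra hlt
      push_neg at hlt
      have h5 : u i ^ (1-ρ) < v ^ (1-ρ) := Real.rpow_lt_rpow (hupos i).le hlt (by linarith)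
      have h6 : u i ^ (1-ρ) * u i ^ (ρ-1) = 1 := by
        rw [← Real.rpow_add (hupos i)]; norm_num
      have h7 : 0 < u i ^ (ρ-1) := Real.rpow_pos_of_pos (hupos i) _
      nlinarith
  · intro j hj
    rcases eq_or_lt_of_le (hlam0 j) with h0 | hpos
    · exfalso
      apply hj
      intro y _
      have hqz : q j = 0 := by simp [hq, ← h0]
      simp [hqz]
    · exact (hforce j hpos).1

end BandwidthAlloc
end
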